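/- In a global graph with r communities of n vertices each (each inducing a complete graph), if the graph has diameter at most 2, then the number of bridges is at least (r−1)·n. -/

import Mathlib

open SimpleGraph

variable {r n : ℕ}

/-- Each community (fiber of `Prod.fst`) induces a complete graph. -/
def IntraComplete (G : SimpleGraph (Fin r × Fin n)) : Prop :=
  ∀ u v : Fin r × Fin n, u ≠ v → u.1 = v.1 → G.Adj u v

/-- Number of bridges: edges whose endpoints lie in distinct communities. -/
noncomputable def bridgeCount (G : SimpleGraph (Fin r × Fin n)) : ℕ :=
  {e ∈ G.edgeSet | ¬ (Sym2.map Prod.fst e).IsDiag}.ncard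

/-- A vertex is central if it is an endpoint of a bridge. -/
def IsCentral (G : SimpleGraph (Fin r × Fin n)) (v : Fin r × Fin n) : Prop :=
  ∃ w, G.Adj v w ∧ v.1 ≠ w.1

/-- Number of central vertices. -/
noncomputable def centralCount (G : SimpleGraph (Fin r × Fin n)) : ℕ :=
  {v | IsCentral G v}.ncard

/-- Every two vertices are joined by a path (walk) of length at most `k`. -/
def DiamLe (G : SimpleGraph (Fin r × Fin n)) (k : ℕ) : Prop :=
  ∀ u v : Fin r × Fin n, ∃ p : G.Walk u v, p.length ≤ k

/- ------------------ auxiliary material ------------------ -/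

private lemma walk_len_two {V : Type*} {G : SimpleGraph V} {u v : V} (p : G.Walk u v)
    (h : p.length ≤ 2) : u = v ∨ G.Adj u v ∨ ∃ w, G.Adj u w ∧ G.Adj w v := by
  cases p with
  | nil => left; rfl
  | cons h1 q =>
    cases q with
    | nil => right; left; exact h1
    | cons hh q2 =>
      cases q2 with
      | nil => right; right; exact ⟨_, h1, hh⟩
      | cons _ _ => simp [SimpleGraph.Walk.length_cons] at h

/-- The subgraph consisting of the bridges. -/
def bGraph (G : SimpleGraph (Fin r × Fin n)) : SimpleGraph (Fin r × Fin n) where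
  Adj a b := G.Adj a b ∧ a.1 ≠ b.1
  symm := ⟨fun a b h => ⟨h.1.symm, Ne.symm h.2⟩⟩
  loopless := ⟨fun a h => h.2 rfl⟩

private lemma bridgeSet_eq (G : SimpleGraph (Fin r × Fin n)) :
    {e ∈ G.edgeSet | ¬ (Sym2.map Prod.fst e).IsDiag} = (bGraph G).edgeSet := by
  ext e
  induction e using Sym2.ind with
  | _ a b =>
    simp [bGraph, Sym2.map_pair_eq, Sym2.isDiag_iff_proj_eq, SimpleGraph.mem_edgeSet,
      Set.mem_sep_iff]

private lemma le_bridgeCount (G : SimpleGraph (Fin r × Fin n))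
    (S : Finset (Fin r × Fin n)) (f : Fin r × Fin n → Fin r × Fin n)
    (hf : ∀ u ∈ S, G.Adj u (f u) ∧ u.1 ≠ (f u).1)
    (hinj : ∀ u ∈ S, ∀ v ∈ S, s(u, f u) = s(v, f v) → u = v) :
    S.card ≤ bridgeCount G := by
  classical
  have h1 : (S.image (fun u => s(u, f u))).card = S.card :=
    Finset.card_image_of_injOn (fun u hu v hv h => hinj u hu v hv h)
  have h2 : (↑(S.image (fun u => s(u, f u))) : Set (Sym2 (Fin r × Fin n)))
      ⊆ {e ∈ G.edgeSet | ¬ (Sym2.map Prod.fst e).IsDiag} := by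
    intro e he
    simp only [Finset.coe_image, Set.mem_image, Finset.mem_coe] at he
    obtain ⟨u, hu, rfl⟩ := he
    refine ⟨(G.mem_edgeSet).mpr (hf u hu).1, ?_⟩
    rw [Sym2.map_pair_eq, Sym2.isDiag_iff_proj_eq]
    exact (hf u hu).2
  calc S.card = (S.image (fun u => s(u, f u))).card := h1.symm
    _ = (↑(S.image (fun u => s(u, f u))) : Set (Sym2 (Fin r × Fin n))).ncard :=
        (Set.ncard_coe_finset _).symm
    _ ≤ bridgeCount G := Set.ncard_le_ncard h2 (Set.toFinite _)

private lemma card_filter_fst_ne (i : Fin r) :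
    (Finset.univ.filter (fun u : Fin r × Fin n => u.1 ≠ i)).card = (r - 1) * n := by
  classical
  have h : Finset.univ.filter (fun u : Fin r × Fin n => u.1 ≠ i)
      = (Finset.univ.erase i) ×ˢ (Finset.univ : Finset (Fin n)) := by
    ext u
    simp [Finset.mem_product, Finset.mem_erase]
  rw [h, Finset.card_product, Finset.card_erase_of_mem (Finset.mem_univ i)]
  simp

theorem stmt_3 (r n : ℕ) (hr : 2 ≤ r) (G : SimpleGraph (Fin r × Fin n))
    (hG : IntraComplete G) (h2 : DiamLe G 2) :
    (r - 1) * n ≤ bridgeCount G := by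
  classical
  by_cases hcen : ∀ v : Fin r × Fin n, IsCentral G v
  · by_cases hpen : ∃ v w : Fin r × Fin n, G.Adj v w ∧ v.1 ≠ w.1 ∧
        ∀ x, G.Adj v x → v.1 ≠ x.1 → x = w
    · -- Case: all vertices central, and v has a unique bridge neighbour w.
      obtain ⟨v, w, hvw, hij, huniq⟩ := hpen
      have hijne : v.1 ≠ w.1 := hij
      -- for every vertex u outside both communities, u has a bridge into
      -- v's community or to w itself
      have hexF : ∀ u : Fin r × Fin n, u.1 ≠ v.1 → u.1 ≠ w.1 →
          ∃ y, G.Adj u y ∧ (y.1 = v.1 ∨ y = w) := by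
        intro u hui huj
        obtain ⟨p, hp⟩ := h2 v u
        rcases walk_len_two p hp with h | h | ⟨x, hvx, hxu⟩
        · exact absurd (h ▸ rfl) (Ne.symm hui)
        · by_cases hsame : v.1 = u.1
          · exact absurd hsame (Ne.symm hui)
          · have huweq : u = w := huniq u h hsame
            exact absurd (by rw [huweq]) huj
        · by_cases hsame : v.1 = x.1
          · exact ⟨x, hxu.symm, Or.inl hsame.symm⟩
          · have hxw : x = w := huniq x hvx hsame
            exact ⟨w, hxw ▸ hxu.symm, Or.inr rfl⟩
      -- construct the assignment f with its full specification
      have hfex : ∀ u : Fin r × Fin n, ∃ y : Fin r × Fin n, u.1 ≠ v.1 →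
          (G.Adj u y ∧ u.1 ≠ y.1 ∧
            ((u = w ∧ y = v) ∨ (u ≠ w ∧ u.1 = w.1 ∧ y.1 ≠ w.1) ∨
              (u.1 ≠ w.1 ∧ (y.1 = v.1 ∨ y = w)))) := by
        intro u
        by_cases hui : u.1 = v.1
        · exact ⟨u, fun h => absurd hui h⟩
        · by_cases huw : u = w
          · refine ⟨v, fun _ => ⟨?_, ?_, Or.inl ⟨huw, rfl⟩⟩⟩
            · rw [huw]; exact hvw.symm
            · rw [huw]; exact Ne.symm hijne
          · by_cases huj : u.1 = w.1
            · obtain ⟨c, hc1, hc2⟩ := hcen u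
              refine ⟨c, fun _ => ⟨hc1, hc2, Or.inr (Or.inl ⟨huw, huj, ?_⟩)⟩⟩
              intro hh
              exact hc2 (huj.trans hh.symm)
            · obtain ⟨y, hy1, hy2⟩ := hexF u hui huj
              refine ⟨y, fun _ => ⟨hy1, ?_, Or.inr (Or.inr ⟨huj, hy2⟩)⟩⟩
              rcases hy2 with h | h
              · rw [h]; exact hui
              · rw [h]; exact huj
      choose f hf using hfex
      have key := le_bridgeCount G
        (Finset.univ.filter (fun u : Fin r × Fin n => u.1 ≠ v.1)) f
        (by
          intro u hu
          have hui : u.1 ≠ v.1 := (Finset.mem_filter.mp hu).2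
          exact ⟨(hf u hui).1, (hf u hui).2.1⟩)
        (by
          intro u₁ hu₁ u₂ hu₂ heq
          have hui₁ : u₁.1 ≠ v.1 := (Finset.mem_filter.mp hu₁).2
          have hui₂ : u₂.1 ≠ v.1 := (Finset.mem_filter.mp hu₂).2
          rcases Sym2.eq_iff.mp heq with ⟨ha, _⟩ | ⟨ha, hb⟩
          · exact ha
          -- cross case: u₁ = f u₂ and f u₁ = u₂
          · exfalso
            obtain ⟨_, _, hclass1⟩ := hf u₁ hui₁
            obtain ⟨_, _, hclass2⟩ := hf u₂ hui₂
            rcases hclass1 with ⟨he1, hfv1⟩ | ⟨hw1, hj1, hfj1⟩ | ⟨hj1, hy1⟩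
            · -- u₁ = w, f u₁ = v, so u₂ = v
              exact hui₂ (by rw [← hb, hfv1])
            · -- u₁ ≠ w, u₁.1 = w.1, (f u₁).1 ≠ w.1
              rcases hclass2 with ⟨he2, hfv2⟩ | ⟨hw2, hj2, hfj2⟩ | ⟨hj2, hy2⟩
              · -- u₂ = w, f u₂ = v, u₁ = v
                exact hui₁ (by rw [ha, hfv2])
              · -- u₂.1 = w.1, but u₂ = f u₁ has (f u₁).1 ≠ w.1
                exact hfj1 (by rw [hb]; exact hj2)
              · -- u₁ = f u₂ with (f u₂).1 = v.1 or f u₂ = w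
                rcases hy2 with h | h
                · exact hui₁ (by rw [ha]; exact h)
                · exact hw1 (by rw [ha]; exact h)
            · -- u₁.1 ≠ w.1, f u₁ ∈ community of v or = w; u₂ = f u₁
              rcases hy1 with h | h
              · exact hui₂ (by rw [← hb]; exact h)
              · -- u₂ = w
                have hu2w : u₂ = w := by rw [← hb]; exact h
                rcases hclass2 with ⟨he2, hfv2⟩ | ⟨hw2, hj2, hfj2⟩ | ⟨hj2, hy2⟩
                · exact hui₁ (by rw [ha, hfv2])
                · exact hw2 hu2w
                · exact hj2 (by rw [hu2w]))
      calc (r - 1) * n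
          = (Finset.univ.filter (fun u : Fin r × Fin n => u.1 ≠ v.1)).card :=
            (card_filter_fst_ne v.1).symm
        _ ≤ bridgeCount G := key
    · -- Case: all vertices central and every vertex has at least two bridge
      -- neighbours: handshake gives at least r*n bridges.
      push_neg at hpen
      have hdeg : ∀ u : Fin r × Fin n, 2 ≤ (bGraph G).degree u := by
        intro u
        obtain ⟨w, hw1, hw2⟩ := hcen u
        obtain ⟨x, hx1, hx2, hxw⟩ := hpen u w hw1 hw2
        rw [SimpleGraph.degree]
        refine Finset.one_lt_card.mpr ⟨w, ?_, x, ?_, Ne.symm hxw⟩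
        · exact (SimpleGraph.mem_neighborFinset _ _ _).mpr (And.intro hw1 hw2)
        · exact (SimpleGraph.mem_neighborFinset _ _ _).mpr (And.intro hx1 hx2)
      have hsum : ∑ u : Fin r × Fin n, (bGraph G).degree u
          = 2 * (bGraph G).edgeFinset.card :=
        SimpleGraph.sum_degrees_eq_twice_card_edges _
      have hlow : (r * n) * 2 ≤ ∑ u : Fin r × Fin n, (bGraph G).degree u := by
        have := Finset.card_nsmul_le_sum Finset.univ
          (fun u => (bGraph G).degree u) 2 (fun u _ => hdeg u)
        simpa [Finset.card_univ, mul_comm] using this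
      have hcard : r * n ≤ (bGraph G).edgeFinset.card := by omega
      have hbc : bridgeCount G = (bGraph G).edgeFinset.card := by
        rw [bridgeCount, bridgeSet_eq, ← SimpleGraph.coe_edgeFinset, Set.ncard_coe_finset]
      have : (r - 1) * n ≤ r * n := Nat.mul_le_mul_right n (Nat.sub_le r 1)
      omega
  · -- Case: some vertex v is not central: every vertex outside v's community
    -- has a bridge into it.
    push_neg at hcen
    obtain ⟨v, hv⟩ := hcen
    have hv' : ∀ w, G.Adj v w → v.1 = w.1 := by
      intro w hw
      by_contra hne
      exact hv ⟨w, hw, hne⟩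
    have hex : ∀ u : Fin r × Fin n, ∃ y, u.1 ≠ v.1 → (G.Adj u y ∧ y.1 = v.1) := by
      intro u
      by_cases hui : u.1 = v.1
      · exact ⟨u, fun h => absurd hui h⟩
      · obtain ⟨p, hp⟩ := h2 v u
        rcases walk_len_two p hp with h | h | ⟨x, hvx, hxu⟩
        · exact absurd (h ▸ rfl) (Ne.symm hui)
        · exact absurd (hv' u h).symm hui
        · exact ⟨x, fun _ => ⟨hxu.symm, (hv' x hvx).symm⟩⟩
    choose f hf using hex
    have key := le_bridgeCount G
      (Finset.univ.filter (fun u : Fin r × Fin n => u.1 ≠ v.1)) f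
      (by
        intro u hu
        have hui : u.1 ≠ v.1 := (Finset.mem_filter.mp hu).2
        refine ⟨(hf u hui).1, ?_⟩
        rw [(hf u hui).2]
        exact hui)
      (by
        intro u₁ hu₁ u₂ hu₂ heq
        have hui₁ : u₁.1 ≠ v.1 := (Finset.mem_filter.mp hu₁).2
        have hui₂ : u₂.1 ≠ v.1 := (Finset.mem_filter.mp hu₂).2
        rcases Sym2.eq_iff.mp heq with ⟨ha, _⟩ | ⟨ha, hb⟩
        · exact ha
        · exact absurd (by rw [ha]; exact (hf u₂ hui₂).2) hui₁)
    calc (r - 1) * n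
        = (Finset.univ.filter (fun u : Fin r × Fin n => u.1 ≠ v.1)).card :=
          (card_filter_fst_ne v.1).symm
      _ ≤ bridgeCount G := key
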